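/- If M = [[M₁₁, M₁₂],[M₂₁, M₂₂]] ∈ Sp(2(n+k)) (blocks of sizes 2n×2n, 2n×2k, 2k×2n, 2k×2k respectively) and S is a 2n×2n real matrix with 2S - iJ_{2n} ≥ 0, then the matrix S' = M₁₁^T S M₁₁ + ½ M₂₁^T M₂₁ satisfies 2S' - iJ_{2n} ≥ 0. -/

import Mathlib

open Matrix
open scoped ComplexOrder

/-- The 2x2 matrix J₂ = [[0,-1],[1,0]]. -/
def J2 : Matrix (Fin 2) (Fin 2) ℝ := !![0, -1; 1, 0]

/-- The 2n x 2n block-diagonal matrix with n diagonal blocks J₂. -/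
def J (n : ℕ) : Matrix (Fin (2*n)) (Fin (2*n)) ℝ :=
  Matrix.of fun i j =>
    if i.val = j.val + 1 ∧ j.val % 2 = 0 then 1
    else if j.val = i.val + 1 ∧ i.val % 2 = 0 then -1 else 0

lemma J_transpose' (n : ℕ) : (J n)ᵀ = - (J n) := by
  ext i j
  simp only [_root_.J, transpose_apply, of_apply, Matrix.neg_apply]
  split_ifs <;> first | ring1 | omega | (exfalso; simp only [true_and, and_true] at *; omega)

lemma J_mul_J' (n : ℕ) : J n * J n = -1 := by
  ext i j
  rw [mul_apply]
  have hilt := i.isLt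
  have hjlt := j.isLt
  rcases Nat.even_or_odd i.val with hi | hi
  · rw [Nat.even_iff] at hi
    have hlt : i.val + 1 < 2*n := by omega
    rw [Finset.sum_eq_single ⟨i.val+1, hlt⟩]
    · have h1 : J n i ⟨i.val+1, hlt⟩ = -1 := by
        simp only [_root_.J, of_apply, Fin.val_mk]
        split_ifs <;> first | rfl | omega | (exfalso; simp only [true_and, and_true] at *; omega)
      have h2 : J n ⟨i.val+1, hlt⟩ j = if i = j then 1 else 0 := by
        simp only [_root_.J, of_apply, Fin.ext_iff, Fin.val_mk]
        split_ifs <;> first | rfl | omega | (exfalso; simp only [true_and, and_true] at *; omega)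
      rw [h1, h2]
      simp only [Matrix.neg_apply, one_apply]
      split_ifs <;> ring
    · intro b _ hb
      have hbv : b.val ≠ i.val + 1 := fun h => hb (Fin.ext h)
      have := b.isLt
      have h0 : J n i b = 0 := by
        simp only [_root_.J, of_apply, Fin.val_mk]
        split_ifs <;> first | rfl | omega | (exfalso; simp only [true_and, and_true] at *; omega)
      rw [h0, zero_mul]
    · simp
  · rw [Nat.odd_iff] at hi
    have hlt : i.val - 1 < 2*n := by omega
    rw [Finset.sum_eq_single ⟨i.val-1, hlt⟩]
    · have h1 : J n i ⟨i.val-1, hlt⟩ = 1 := by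
        simp only [_root_.J, of_apply, Fin.val_mk]
        split_ifs <;> first | rfl | omega | (exfalso; simp only [true_and, and_true] at *; omega)
      have h2 : J n ⟨i.val-1, hlt⟩ j = if i = j then -1 else 0 := by
        simp only [_root_.J, of_apply, Fin.ext_iff, Fin.val_mk]
        split_ifs <;> first | rfl | omega | (exfalso; simp only [true_and, and_true] at *; omega)
      rw [h1, h2]
      simp only [Matrix.neg_apply, one_apply]
      split_ifs <;> ring
    · intro b _ hb
      have hbv : b.val ≠ i.val - 1 := fun h => hb (Fin.ext h)
      have := b.isLt
      have h0 : J n i b = 0 := by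
        simp only [_root_.J, of_apply, Fin.val_mk]
        split_ifs <;> first | rfl | omega | (exfalso; simp only [true_and, and_true] at *; omega)
      rw [h0, zero_mul]
    · simp

lemma mapC_mul' {p q r : Type*} [Fintype q] (A : Matrix p q ℝ) (B : Matrix q r ℝ) :
    (A * B).map Complex.ofReal = A.map Complex.ofReal * B.map Complex.ofReal := by
  ext i j
  simp [Matrix.mul_apply, Matrix.map_apply]

lemma mapC_add' {p q : Type*} (A B : Matrix p q ℝ) :
    (A + B).map Complex.ofReal = A.map Complex.ofReal + B.map Complex.ofReal := by
  ext i j; simp [Matrix.map_apply]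

lemma mapC_smul' {p q : Type*} (r : ℝ) (A : Matrix p q ℝ) :
    (r • A).map Complex.ofReal = (r : ℂ) • A.map Complex.ofReal := by
  ext i j; simp [Matrix.map_apply]

lemma mapC_conjT' {p q : Type*} (A : Matrix p q ℝ) :
    (A.map Complex.ofReal)ᴴ = Aᵀ.map Complex.ofReal := by
  ext i j; simp [Matrix.map_apply, Matrix.conjTranspose_apply, Complex.conj_ofReal]

lemma mapC_neg' {p q : Type*} (A : Matrix p q ℝ) :
    (-A).map Complex.ofReal = -(A.map Complex.ofReal) := by
  ext i j; simp [Matrix.map_apply]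

lemma mapC_one' {p : Type*} [DecidableEq p] :
    (1 : Matrix p p ℝ).map Complex.ofReal = 1 :=
  Matrix.map_one _ Complex.ofReal_zero Complex.ofReal_one

lemma half_psd' {p : Type*} [Fintype p] [DecidableEq p] (Q : Matrix p p ℂ)
    (hH : Q.IsHermitian) (hQ2 : Q * Q = (2:ℂ) • Q) : Q.PosSemidef := by
  have hQe : Q = (1/2:ℂ) • (Qᴴ * Q) := by
    rw [hH.eq, hQ2, smul_smul]; norm_num
  rw [hQe]
  exact (Matrix.posSemidef_conjTranspose_mul_self Q).smul (by rw [Complex.le_def]; norm_num)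

/-- A symplectic Gaussian channel maps Gaussian covariance matrices to Gaussian
covariance matrices. -/
theorem symplectic_channel_preserves_gaussian_covariance {n k : ℕ}
    (M₁₁ : Matrix (Fin (2*n)) (Fin (2*n)) ℝ) (M₁₂ : Matrix (Fin (2*n)) (Fin (2*k)) ℝ)
    (M₂₁ : Matrix (Fin (2*k)) (Fin (2*n)) ℝ) (M₂₂ : Matrix (Fin (2*k)) (Fin (2*k)) ℝ)
    (hM : (Matrix.fromBlocks M₁₁ M₁₂ M₂₁ M₂₂)ᵀ * Matrix.fromBlocks (J n) 0 0 (J k) *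
        Matrix.fromBlocks M₁₁ M₁₂ M₂₁ M₂₂ = Matrix.fromBlocks (J n) 0 0 (J k))
    (S : Matrix (Fin (2*n)) (Fin (2*n)) ℝ)
    (hS : ((2 : ℂ) • S.map (Complex.ofReal) -
        Complex.I • (J n).map (Complex.ofReal)).PosSemidef) :
    ((2 : ℂ) • ((M₁₁ᵀ * S * M₁₁ + (1/2 : ℝ) • (M₂₁ᵀ * M₂₁)).map (Complex.ofReal)) -
        Complex.I • (J n).map (Complex.ofReal)).PosSemidef := by
  -- extract the (1,1) block identity from the symplectic condition
  rw [Matrix.fromBlocks_transpose, Matrix.fromBlocks_multiply, Matrix.fromBlocks_multiply] at hM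
  have h11 : M₁₁ᵀ * J n * M₁₁ + M₂₁ᵀ * J k * M₂₁ = J n := by
    have := congrArg Matrix.toBlocks₁₁ hM
    simpa using this
  -- complex versions
  set A := M₁₁.map Complex.ofReal with hA
  set B := M₂₁.map Complex.ofReal with hB
  set Sc := S.map Complex.ofReal with hSc
  set Jn := (J n).map Complex.ofReal with hJn
  set Jk := (J k).map Complex.ofReal with hJk
  -- the matrix 1 - i Jk is positive semidefinite
  have hJkT : Jkᵀ = -Jk := by
    rw [hJk, ← Matrix.transpose_map, J_transpose', mapC_neg']
  have hJk2 : Jk * Jk = -1 := by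
    rw [hJk, ← mapC_mul', J_mul_J']
    ext i j
    simp [Matrix.map_apply, Matrix.one_apply, apply_ite]
  have hJkH : Jkᴴ = -Jk := by
    rw [hJk, mapC_conjT', J_transpose', mapC_neg']
  have hQH : (1 - Complex.I • Jk).IsHermitian := by
    unfold Matrix.IsHermitian
    rw [Matrix.conjTranspose_sub, Matrix.conjTranspose_one, Matrix.conjTranspose_smul, hJkH]
    simp [Complex.star_def, Complex.conj_I]
  have hs : (Complex.I • Jk) * (Complex.I • Jk) = 1 := by
    rw [Matrix.smul_mul, Matrix.mul_smul, smul_smul, Complex.I_mul_I, hJk2]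
    simp
  have hQ2 : (1 - Complex.I • Jk) * (1 - Complex.I • Jk) = (2:ℂ) • (1 - Complex.I • Jk) := by
    rw [Matrix.sub_mul, Matrix.mul_sub, Matrix.mul_sub, hs]
    simp only [Matrix.one_mul, Matrix.mul_one]
    rw [two_smul]
    abel
  have hQ : (1 - Complex.I • Jk).PosSemidef := half_psd' _ hQH hQ2
  -- key algebraic identity
  have key : (2 : ℂ) • ((M₁₁ᵀ * S * M₁₁ + (1/2 : ℝ) • (M₂₁ᵀ * M₂₁)).map (Complex.ofReal)) -
        Complex.I • Jn
      = Aᴴ * ((2:ℂ) • Sc - Complex.I • Jn) * A + Bᴴ * (1 - Complex.I • Jk) * B := by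
    rw [hA, hB, mapC_conjT', mapC_conjT']
    conv_lhs => rw [hJn, ← h11]
    simp only [mapC_add', mapC_mul', mapC_smul', hSc, hJk]
    push_cast
    simp only [Matrix.mul_sub, Matrix.sub_mul, Matrix.mul_add, Matrix.add_mul,
      Matrix.mul_smul, Matrix.smul_mul, Matrix.mul_one, Matrix.one_mul, smul_smul,
      smul_add, smul_sub, Matrix.mul_assoc]
    norm_num
    abel
  rw [key]
  exact (hS.conjTranspose_mul_mul_same A).add (hQ.conjTranspose_mul_mul_same B)
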